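/- Let m and n be distinct squarefree integers, both different from 1, let A = ℤ[√m, √n] ⊆ ℂ, and let σ and τ be two distinct ring endomorphisms of A. Then the set of all (σ,τ)-derivations of A is a ℤ-submodule of the ℤ-module of ℤ-linear endomorphisms of A, and this submodule is free of rank 4. -/

import Mathlib

theorem q1 (q : ℚ) (k : ℤ) (h : q ^ 2 = (k : ℚ)) : ∃ z : ℤ, (z : ℚ) = q := by
  have hint : IsIntegral ℤ q := by
    refine ⟨Polynomial.X ^ 2 - Polynomial.C k, Polynomial.monic_X_pow_sub_C k two_ne_zero, ?_⟩
    rw [Polynomial.eval₂_sub, Polynomial.eval₂_pow, Polynomial.eval₂_X, Polynomial.eval₂_C]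
    simp [h]
  obtain ⟨y, hy⟩ := IsIntegrallyClosed.isIntegral_iff.mp hint
  exact ⟨y, by simpa using hy⟩

theorem q2 (k : ℤ) (hk : Squarefree k) (q : ℚ) (h : q ^ 2 = (k : ℚ)) : k = 1 := by
  obtain ⟨z, rfl⟩ := q1 q k h
  have hz : z ^ 2 = k := by exact_mod_cast h
  have : IsUnit z := hk z ⟨1, by rw [← hz]; ring⟩
  rcases Int.isUnit_iff.mp this with h1 | h1 <;> rw [← hz, h1] <;> norm_num

theorem unit_of_sq (x : ℤ) (hx : Squarefree x) (a0 : ℤ) (h : x = a0 ^ 2 ∨ x = -a0 ^ 2) :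
    x = 1 ∨ x = -1 := by
  have hu : IsUnit a0 := by
    rcases h with h' | h'
    · exact hx a0 ⟨1, by rw [h']; ring⟩
    · exact hx a0 ⟨-1, by rw [h']; ring⟩
  rcases Int.isUnit_iff.mp hu with h1 | h1 <;> rcases h with h' | h' <;>
    rw [h', h1] <;> norm_num

theorem lmn (m n : ℤ) (hm : Squarefree m) (hn : Squarefree n) (hmn : m ≠ n)
    (z : ℤ) (h : z ^ 2 = m * n) : False := by
  have hm0 : m ≠ 0 := hm.ne_zero
  have hn0 : n ≠ 0 := hn.ne_zero
  set g : ℤ := (m.gcd n : ℤ) with hg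
  have hgpos : 0 < m.gcd n := Int.gcd_pos_of_ne_zero_left n hm0
  have hg0 : g ≠ 0 := by positivity
  have hco : IsCoprime (m / g) (n / g) := by
    rw [Int.isCoprime_iff_gcd_eq_one]
    exact Int.gcd_div_gcd_div_gcd hgpos
  set m1 := m / g with hm1def
  set n1 := n / g with hn1def
  have hm1 : m = g * m1 := (Int.mul_ediv_cancel' (Int.gcd_dvd_left m n)).symm
  have hn1 : n = g * n1 := (Int.mul_ediv_cancel' (Int.gcd_dvd_right m n)).symm
  have hz2 : z ^ 2 = g ^ 2 * (m1 * n1) := by rw [h, hm1, hn1]; ring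
  have hgz : g ∣ z := (Int.pow_dvd_pow_iff two_ne_zero).mp ⟨m1 * n1, hz2⟩
  obtain ⟨w, rfl⟩ := hgz
  have hw : m1 * n1 = w ^ 2 := by
    have h2 : g ^ 2 * (m1 * n1) = g ^ 2 * w ^ 2 := by linear_combination -hz2
    exact mul_left_cancel₀ (pow_ne_zero 2 hg0) h2
  have hm1sf : Squarefree m1 := hm.squarefree_of_dvd ⟨g, by rw [hm1]; ring⟩
  have hn1sf : Squarefree n1 := hn.squarefree_of_dvd ⟨g, by rw [hn1]; ring⟩
  obtain ⟨a0, ha0⟩ := Int.sq_of_isCoprime hco hw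
  obtain ⟨b0, hb0⟩ := Int.sq_of_isCoprime hco.symm (by rw [mul_comm] at hw; exact hw)
  have hmu := unit_of_sq m1 hm1sf a0 ha0
  have hnu := unit_of_sq n1 hn1sf b0 hb0
  have : m1 = n1 := by
    rcases hmu with h1 | h1 <;> rcases hnu with h2 | h2 <;> rw [h1, h2] <;>
      first | rfl | (exfalso; rw [h1, h2] at hw; nlinarith [sq_nonneg w])
  exact hmn (by rw [hm1, hn1, this])

theorem irr2 (k : ℤ) (hk : Squarefree k) (hk1 : k ≠ 1) (x : ℂ) (hx : x ^ 2 = (k : ℂ))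
    (p q : ℚ) (h : (p : ℂ) + (q : ℂ) * x = 0) : p = 0 ∧ q = 0 := by
  by_cases hq : q = 0
  · subst hq
    simp only [Rat.cast_zero, zero_mul, add_zero] at h
    exact ⟨by exact_mod_cast h, rfl⟩
  · exfalso
    have hqC : (q : ℂ) ≠ 0 := by exact_mod_cast hq
    have hxval : x = ((-p / q : ℚ) : ℂ) := by
      push_cast
      field_simp
      linear_combination h
    have hsq : ((((-p / q) ^ 2 : ℚ)) : ℂ) = ((k : ℚ) : ℂ) := by
      push_cast
      rw [div_pow]
      rw [hxval] at hx
      push_cast at hx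
      rw [div_pow] at hx
      linear_combination hx
    exact hk1 (q2 k hk (-p / q) (by exact_mod_cast hsq))

theorem sn_notin (m n : ℤ) (hm : Squarefree m) (hn : Squarefree n)
    (hm1 : m ≠ 1) (hn1 : n ≠ 1) (hmn : m ≠ n)
    (sm sn : ℂ) (hsm : sm ^ 2 = (m : ℂ)) (hsn : sn ^ 2 = (n : ℂ))
    (p q : ℚ) (h : (p : ℂ) + (q : ℂ) * sm = sn) : False := by
  have key : ((p ^ 2 + q ^ 2 * m - n : ℚ) : ℂ) + ((2 * p * q : ℚ) : ℂ) * sm = 0 := by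
    push_cast
    linear_combination ((p : ℂ) + (q : ℂ) * sm + sn) * h - (q : ℂ) ^ 2 * hsm + hsn
  obtain ⟨h1, h2⟩ := irr2 m hm hm1 sm hsm _ _ key
  have hpq : p * q = 0 := by linarith
  rcases mul_eq_zero.mp hpq with hp | hq
  · subst hp
    have hq0 : q ≠ 0 := by
      intro h'
      subst h'
      have : (n : ℚ) = 0 := by push_cast at h1; linarith
      exact hn.ne_zero (by exact_mod_cast this)
    have hqm : q ^ 2 * (m : ℚ) = (n : ℚ) := by push_cast at h1 ⊢; linarith
    have hmn' : ((q * m) : ℚ) ^ 2 = ((m * n : ℤ) : ℚ) := by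
      push_cast
      linear_combination (m : ℚ) * hqm
    obtain ⟨z, hz⟩ := q1 _ _ hmn'
    have hz2 : (z : ℚ) ^ 2 = ((m * n : ℤ) : ℚ) := by rw [hz]; exact hmn'
    exact lmn m n hm hn hmn z (by exact_mod_cast hz2)
  · subst hq
    have : p ^ 2 = (n : ℚ) := by push_cast at h1 ⊢; linarith
    exact hn1 (q2 n hn p this)

theorem radind (m n : ℤ) (hm : Squarefree m) (hn : Squarefree n)
    (hm1 : m ≠ 1) (hn1 : n ≠ 1) (hmn : m ≠ n)
    (sm sn : ℂ) (hsm : sm ^ 2 = (m : ℂ)) (hsn : sn ^ 2 = (n : ℂ))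
    (a b c d : ℚ) (h : (a : ℂ) + (b : ℂ) * sm + (c : ℂ) * sn + (d : ℂ) * (sm * sn) = 0) :
    a = 0 ∧ b = 0 ∧ c = 0 ∧ d = 0 := by
  by_cases hP : (c : ℂ) + (d : ℂ) * sm = 0
  · obtain ⟨hc, hd⟩ := irr2 m hm hm1 sm hsm c d hP
    subst hc; subst hd
    simp only [Rat.cast_zero, zero_mul, add_zero] at h
    obtain ⟨ha, hb⟩ := irr2 m hm hm1 sm hsm a b h
    exact ⟨ha, hb, rfl, rfl⟩
  · exfalso
    have he : (c ^ 2 - d ^ 2 * m : ℚ) ≠ 0 := by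
      intro h'
      by_cases hd : d = 0
      · subst hd
        have hc : c = 0 := by
          have : c ^ 2 = 0 := by linarith
          exact pow_eq_zero_iff two_ne_zero |>.mp this
        subst hc
        exact hP (by simp)
      · have : (c / d) ^ 2 = (m : ℚ) := by
          field_simp
          linear_combination h'
        exact hm1 (q2 m hm (c / d) this)
    have heC : ((c ^ 2 - d ^ 2 * m : ℚ) : ℂ) ≠ 0 := by exact_mod_cast he
    have hkey : ((-(a * c - b * d * m) : ℚ) : ℂ) + ((-(b * c - a * d) : ℚ) : ℂ) * sm
        = ((c ^ 2 - d ^ 2 * m : ℚ) : ℂ) * sn := by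
      push_cast
      linear_combination (-(c : ℂ) + (d : ℂ) * sm) * h + (-(b : ℂ) * d - (d : ℂ) ^ 2 * sn) * hsm
    apply sn_notin m n hm hn hm1 hn1 hmn sm sn hsm hsn
      (-(a * c - b * d * m) / (c ^ 2 - d ^ 2 * m)) (-(b * c - a * d) / (c ^ 2 - d ^ 2 * m))
    rw [Rat.cast_div, Rat.cast_div, div_mul_eq_mul_div, ← add_div, div_eq_iff heC]
    linear_combination hkey


set_option maxHeartbeats 1000000 in
theorem main {A : Type*} [CommRing A] [IsDomain A] (m n : ℤ)
    (hmA : ((m : ℤ) : A) ≠ 0) (hnA : ((n : ℤ) : A) ≠ 0) (h2A : (2 : A) ≠ 0)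
    (B : Module.Basis (Fin 4) ℤ A) (hB0 : B 0 = 1)
    (he1 : B 1 * B 1 = ((m : ℤ) : A)) (he2 : B 2 * B 2 = ((n : ℤ) : A))
    (he3 : B 3 = B 1 * B 2)
    (σ τ : A →+* A) (hστ : σ ≠ τ) :
    ∃ S : Submodule ℤ (A →ₗ[ℤ] A),
      (∀ D, D ∈ S ↔ ∀ x y, D (x * y) = D x * τ y + σ x * D y) ∧
      Module.Free ℤ S ∧ Module.finrank ℤ S = 4 := by
  classical
  have hA : Module.Free ℤ A := Module.Free.of_basis B
  have hAfin : Module.Finite ℤ A := Module.Finite.of_basis B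
  -- basic elements
  set e1 := B 1 with he1def
  set e2 := B 2 with he2def
  have hB1 : B 1 = e1 := rfl
  have hB2 : B 2 = e2 := rfl
  have hone : B 0 = 1 := hB0
  have he1ne : e1 ≠ 0 := by
    intro h
    apply hmA; rw [← he1, h, mul_zero]
  have he2ne : e2 ≠ 0 := by
    intro h
    apply hnA; rw [← he2, h, mul_zero]
  -- σ and τ take ±e1 on e1, ±e2 on e2
  have sq_cases1 : ∀ f : A →+* A, f e1 = e1 ∨ f e1 = -e1 := by
    intro f
    have hsq : (f e1 - e1) * (f e1 + e1) = 0 := by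
      have : f e1 * f e1 = ((m : ℤ) : A) := by rw [← map_mul, he1, map_intCast]
      linear_combination this - he1
    rcases mul_eq_zero.mp hsq with h | h
    · left; linear_combination h
    · right; linear_combination h
  have sq_cases2 : ∀ f : A →+* A, f e2 = e2 ∨ f e2 = -e2 := by
    intro f
    have hsq : (f e2 - e2) * (f e2 + e2) = 0 := by
      have : f e2 * f e2 = ((n : ℤ) : A) := by rw [← map_mul, he2, map_intCast]
      linear_combination this - he2
    rcases mul_eq_zero.mp hsq with h | h
    · left; linear_combination h
    · right; linear_combination h
  -- if σ, τ agree on e1, e2 they are equal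
  have hdiff : σ e1 ≠ τ e1 ∨ σ e2 ≠ τ e2 := by
    by_contra hcon
    push_neg at hcon
    obtain ⟨hc1, hc2⟩ := hcon
    apply hστ
    have : σ.toAddMonoidHom.toIntLinearMap = τ.toAddMonoidHom.toIntLinearMap := by
      apply Module.Basis.ext B
      intro i
      fin_cases i <;>
        simp only [AddMonoidHom.coe_toIntLinearMap, RingHom.coe_coe,
          RingHom.toAddMonoidHom_eq_coe]
      · show σ (B 0) = τ (B 0)
        rw [hone, map_one, map_one]
      · exact hc1
      · exact hc2
      · show σ (B 3) = τ (B 3)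
        rw [he3, map_mul, map_mul, hc1, hc2]
    ext x
    exact congrArg (fun f => f x) (congrArg DFunLike.coe this)
  -- square identities
  have hσ1 : σ e1 * σ e1 = ((m : ℤ) : A) := by rw [← map_mul, he1, map_intCast]
  have hτ1 : τ e1 * τ e1 = ((m : ℤ) : A) := by rw [← map_mul, he1, map_intCast]
  have hσ2 : σ e2 * σ e2 = ((n : ℤ) : A) := by rw [← map_mul, he2, map_intCast]
  have hτ2 : τ e2 * τ e2 = ((n : ℤ) : A) := by rw [← map_mul, he2, map_intCast]
  -- CORE characterization of derivations by values on the basis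
  have core : ∀ D : A →ₗ[ℤ] A,
      (∀ x y, D (x * y) = D x * τ y + σ x * D y) ↔
      (D 1 = 0 ∧ D e1 * (σ e1 + τ e1) = 0 ∧ D e2 * (σ e2 + τ e2) = 0 ∧
       D e1 * (τ e2 - σ e2) = D e2 * (τ e1 - σ e1) ∧
       D (B 3) = D e1 * τ e2 + σ e1 * D e2) := by
    intro D
    constructor
    · intro h
      have h1 : D 1 = 0 := by
        have h11 := h 1 1
        rw [one_mul, show τ (1:A) = 1 from map_one τ, show σ (1:A) = 1 from map_one σ] at h11
        linear_combination -h11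
      have hDcast : ∀ k : ℤ, D ((k : ℤ) : A) = 0 := by
        intro k
        rw [show ((k : ℤ) : A) = (k : ℤ) • (1 : A) by rw [zsmul_eq_mul, mul_one],
          map_zsmul, h1, smul_zero]
      refine ⟨h1, ?_, ?_, ?_, ?_⟩
      · have h11 := h e1 e1
        rw [he1, hDcast] at h11
        linear_combination -h11
      · have h22 := h e2 e2
        rw [he2, hDcast] at h22
        linear_combination -h22
      · have h12 := h e1 e2
        have h21 := h e2 e1
        rw [mul_comm e2 e1] at h21
        linear_combination h21 - h12
      · have h12 := h e1 e2
        rw [← he3] at h12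
        exact h12
    · rintro ⟨h1, ha, hb, hst, h5⟩
      have hDcast : ∀ k : ℤ, D ((k : ℤ) : A) = 0 := by
        intro k
        rw [show ((k : ℤ) : A) = (k : ℤ) • (1 : A) by rw [zsmul_eq_mul, mul_one],
          map_zsmul, h1, smul_zero]
      have hDmul : ∀ (k : ℤ) (z : A), D (((k : ℤ) : A) * z) = ((k : ℤ) : A) * D z := by
        intro k z
        rw [← zsmul_eq_mul, map_zsmul, zsmul_eq_mul]
      have hL1 : ∀ z, D (1 * z) = D 1 * τ z + σ 1 * D z := by
        intro z; rw [one_mul, show σ (1:A) = 1 from map_one σ, h1]; ring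
      have hR1 : ∀ z, D (z * 1) = D z * τ 1 + σ z * D 1 := by
        intro z; rw [mul_one, show τ (1:A) = 1 from map_one τ, h1]; ring
      have hp13 : e1 * B 3 = ((m : ℤ) : A) * e2 := by
        rw [he3]; linear_combination e2 * he1
      have hp23 : e2 * B 3 = ((n : ℤ) : A) * e1 := by
        rw [he3]; linear_combination e1 * he2
      have hp33 : B 3 * B 3 = ((m * n : ℤ) : A) := by
        rw [he3]; push_cast; linear_combination (e2 * e2) * he1 + ((m : ℤ) : A) * he2
      have hbasis : ∀ i j : Fin 4, D (B i * B j) = D (B i) * τ (B j) + σ (B i) * D (B j) := by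
        intro i j
        fin_cases i <;> fin_cases j
        · show D (B 0 * B 0) = D (B 0) * τ (B 0) + σ (B 0) * D (B 0)
          rw [hone]; exact hL1 1
        · show D (B 0 * e1) = D (B 0) * τ e1 + σ (B 0) * D e1
          rw [hone]; exact hL1 e1
        · show D (B 0 * e2) = D (B 0) * τ e2 + σ (B 0) * D e2
          rw [hone]; exact hL1 e2
        · show D (B 0 * B 3) = D (B 0) * τ (B 3) + σ (B 0) * D (B 3)
          rw [hone]; exact hL1 (B 3)
        · show D (e1 * B 0) = D e1 * τ (B 0) + σ e1 * D (B 0)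
          rw [hone]; exact hR1 e1
        · show D (e1 * e1) = D e1 * τ e1 + σ e1 * D e1
          rw [he1, hDcast]
          linear_combination -ha
        · show D (e1 * e2) = D e1 * τ e2 + σ e1 * D e2
          rw [← he3]; exact h5
        · show D (e1 * B 3) = D e1 * τ (B 3) + σ e1 * D (B 3)
          rw [hp13, hDmul, h5, he3, map_mul]
          linear_combination (-(τ e2)) * ha - D e2 * hσ1
        · show D (e2 * B 0) = D e2 * τ (B 0) + σ e2 * D (B 0)
          rw [hone]; exact hR1 e2
        · show D (e2 * e1) = D e2 * τ e1 + σ e2 * D e1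
          rw [mul_comm e2 e1, ← he3, h5]
          linear_combination hst
        · show D (e2 * e2) = D e2 * τ e2 + σ e2 * D e2
          rw [he2, hDcast]
          linear_combination -hb
        · show D (e2 * B 3) = D e2 * τ (B 3) + σ e2 * D (B 3)
          rw [hp23, hDmul, h5, he3, map_mul]
          linear_combination (τ e2) * hst - (σ e1) * hb - (D e1) * hτ2
        · show D (B 3 * B 0) = D (B 3) * τ (B 0) + σ (B 3) * D (B 0)
          rw [hone]; exact hR1 (B 3)
        · show D (B 3 * e1) = D (B 3) * τ e1 + σ (B 3) * D e1
          rw [mul_comm (B 3) e1, hp13, hDmul, h5, he3, map_mul]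
          linear_combination (-(σ e2)) * ha - (τ e1) * hst - D e2 * hτ1
        · show D (B 3 * e2) = D (B 3) * τ e2 + σ (B 3) * D e2
          rw [mul_comm (B 3) e2, hp23, hDmul, h5, he3, map_mul]
          linear_combination (-(D e1)) * hτ2 - (σ e1) * hb
        · show D (B 3 * B 3) = D (B 3) * τ (B 3) + σ (B 3) * D (B 3)
          rw [hp33, hDcast, h5, he3, map_mul, map_mul]
          linear_combination (-(σ e2 * τ e2)) * ha - ((m : ℤ) : A) * hb
            - (τ e1 * τ e2) * hst - (D e2 * τ e2) * hτ1 - (D e2 * σ e2) * hσ1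
      intro x y
      have step1 : ∀ (j : Fin 4) (x : A), D (x * B j) = D x * τ (B j) + σ x * D (B j) := by
        intro j
        have hcomp : D ∘ₗ LinearMap.mulRight ℤ (B j)
            = LinearMap.mulRight ℤ (τ (B j)) ∘ₗ D
              + LinearMap.mulRight ℤ (D (B j)) ∘ₗ σ.toAddMonoidHom.toIntLinearMap := by
          apply Module.Basis.ext B
          intro i
          simpa [LinearMap.mulRight_apply] using hbasis i j
        intro x
        simpa [LinearMap.mulRight_apply] using LinearMap.congr_fun hcomp x
      have hcomp2 : D ∘ₗ LinearMap.mulLeft ℤ x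
          = LinearMap.mulLeft ℤ (D x) ∘ₗ τ.toAddMonoidHom.toIntLinearMap
            + LinearMap.mulLeft ℤ (σ x) ∘ₗ D := by
        apply Module.Basis.ext B
        intro j
        simpa [LinearMap.mulLeft_apply] using step1 j x
      simpa [LinearMap.mulLeft_apply] using LinearMap.congr_fun hcomp2 y
  -- the submodule of (σ,τ)-derivations
  set u : A := σ e1 + τ e1 with hudef
  set v : A := σ e2 + τ e2 with hvdef
  set t : A := τ e1 - σ e1 with htdef
  set s : A := τ e2 - σ e2 with hsdef
  set W : Submodule ℤ (A × A) :=
    { carrier := {p | p.1 * u = 0 ∧ p.2 * v = 0 ∧ p.1 * s = p.2 * t}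
      add_mem' := by
        rintro p q ⟨hp1, hp2, hp3⟩ ⟨hq1, hq2, hq3⟩
        refine ⟨?_, ?_, ?_⟩ <;>
          simp only [Prod.fst_add, Prod.snd_add, add_mul, hp1, hq1, hp2, hq2, hp3, hq3, add_zero]
      zero_mem' := by
        refine ⟨?_, ?_, ?_⟩ <;> simp
      smul_mem' := by
        rintro c p ⟨hp1, hp2, hp3⟩
        refine ⟨?_, ?_, ?_⟩ <;>
          simp only [Prod.smul_fst, Prod.smul_snd, smul_mul_assoc, hp1, hp2, hp3, smul_zero] }
    with hWdef
  have hWmem : ∀ p : A × A, p ∈ W ↔ (p.1 * u = 0 ∧ p.2 * v = 0 ∧ p.1 * s = p.2 * t) :=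
    fun p => Iff.rfl
  -- the equivalence S ≃ W
  set Sder : Submodule ℤ (A →ₗ[ℤ] A) :=
    { carrier := {D | ∀ x y, D (x * y) = D x * τ y + σ x * D y}
      add_mem' := by
        intro D D' hD hD' x y
        simp only [Set.mem_setOf_eq] at hD hD'
        simp only [LinearMap.add_apply, hD x y, hD' x y]
        ring
      zero_mem' := by intro x y; simp
      smul_mem' := by
        intro c D hD x y
        simp only [Set.mem_setOf_eq] at hD
        simp only [LinearMap.smul_apply, hD x y, smul_add, smul_mul_assoc, mul_smul_comm] }
    with hSdef
  have hSmem : ∀ D : A →ₗ[ℤ] A, D ∈ Sder ↔ ∀ x y, D (x * y) = D x * τ y + σ x * D y :=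
    fun D => Iff.rfl
  have cvec : ∀ w : A × A, ∀ i : Fin 4,
      (B.constr ℤ ![0, w.1, w.2, w.1 * τ e2 + σ e1 * w.2]) (B i)
        = ![0, w.1, w.2, w.1 * τ e2 + σ e1 * w.2] i :=
    fun w i => B.constr_basis ℤ _ i
  have Ψmem : ∀ w : A × A, w ∈ W →
      (B.constr ℤ ![0, w.1, w.2, w.1 * τ e2 + σ e1 * w.2]) ∈ Sder := by
    intro w hw
    obtain ⟨hw1, hw2, hw3⟩ := (hWmem w).mp hw
    rw [hSmem]
    apply (core _).mpr
    have c0 := cvec w 0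
    have c1 := cvec w 1
    have c2 := cvec w 2
    have c3 := cvec w 3
    simp only [Matrix.cons_val_zero, Matrix.cons_val_one, Matrix.head_cons,
      Matrix.cons_val_two, Matrix.tail_cons, Matrix.cons_val_three] at c0 c1 c2 c3
    rw [hone] at c0
    refine ⟨c0, ?_, ?_, ?_, ?_⟩
    · rw [c1]; exact hw1
    · rw [c2]; exact hw2
    · rw [c1, c2]; exact hw3
    · rw [c1, c2, c3]
  have Φmem : ∀ D : A →ₗ[ℤ] A, D ∈ Sder → ((D e1, D e2) : A × A) ∈ W := by
    intro D hD
    obtain ⟨h1, ha, hb, hst, h5⟩ := (core D).mp ((hSmem D).mp hD)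
    exact (hWmem _).mpr ⟨ha, hb, hst⟩
  set Φ : Sder →ₗ[ℤ] W :=
    { toFun := fun D => ⟨(D.1 e1, D.1 e2), Φmem D.1 D.2⟩
      map_add' := fun D D' => rfl
      map_smul' := fun c D => rfl } with hΦdef
  set Ψ : W →ₗ[ℤ] Sder :=
    { toFun := fun w => ⟨B.constr ℤ ![0, w.1.1, w.1.2, w.1.1 * τ e2 + σ e1 * w.1.2],
        Ψmem w.1 w.2⟩
      map_add' := by
        intro w w'
        apply Subtype.ext
        show B.constr ℤ _ = B.constr ℤ _ + B.constr ℤ _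
        rw [← map_add]
        congr 1
        funext i
        fin_cases i <;>
          simp [Prod.fst_add, Prod.snd_add] <;> ring
      map_smul' := by
        intro c w
        apply Subtype.ext
        show B.constr ℤ _ = c • B.constr ℤ _
        rw [← map_smul]
        congr 1
        funext i
        fin_cases i <;>
          simp [Prod.smul_fst, Prod.smul_snd, smul_add, smul_mul_assoc, mul_smul_comm] <;>
          ring }
    with hΨdef
  have hΦΨ : Φ.comp Ψ = LinearMap.id := by
    apply LinearMap.ext
    intro w
    apply Subtype.ext
    show ((_ , _) : A × A) = w.1
    have c1 := cvec w.1 1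
    have c2 := cvec w.1 2
    simp only [Matrix.cons_val_one, Matrix.head_cons, Matrix.cons_val_two,
      Matrix.tail_cons] at c1 c2
    exact Prod.ext c1 c2
  have hΨΦ : Ψ.comp Φ = LinearMap.id := by
    apply LinearMap.ext
    intro D
    apply Subtype.ext
    show B.constr ℤ _ = D.1
    obtain ⟨h1, ha, hb, hst, h5⟩ := (core D.1).mp ((hSmem D.1).mp D.2)
    apply Module.Basis.ext B
    intro i
    rw [B.constr_basis]
    fin_cases i <;>
      simp only [Matrix.cons_val_zero, Matrix.cons_val_one, Matrix.head_cons,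
        Matrix.cons_val_two, Matrix.tail_cons, Matrix.cons_val_three]
    · show (0 : A) = D.1 (B 0)
      rw [hone, h1]
    · rfl
    · rfl
    · show D.1 e1 * τ e2 + σ e1 * D.1 e2 = D.1 (B 3)
      exact h5.symm
  have equivSW : Sder ≃ₗ[ℤ] W := LinearEquiv.ofLinear Φ Ψ hΦΨ hΨΦ
  have hWfree : Module.Free ℤ W := Module.Free.of_basis (Submodule.basisOfPid (B.prod B) W).2
  have hfr4 : Module.finrank ℤ A = 4 := by
    rw [Module.finrank_eq_card_basis B, Fintype.card_fin]
  have hrk4 : Module.rank ℤ A = 4 := by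
    rw [rank_eq_card_basis B, Fintype.card_fin]; norm_num
  -- sign facts
  have hne2e1 : (2 : A) * e1 ≠ 0 := mul_ne_zero h2A he1ne
  have hne2e2 : (2 : A) * e2 ≠ 0 := mul_ne_zero h2A he2ne
  have hfact1 : (σ e1 = τ e1 → ((∀ a : A, a * u = 0 → a = 0) ∧ t = 0))
      ∧ (σ e1 ≠ τ e1 → (u = 0 ∧ (t = 2 * e1 ∨ t = -(2 * e1)))) := by
    constructor
    · intro hc
      constructor
      · intro a hau
        have hu2 : u = 2 * σ e1 := by rw [hudef, ← hc]; ring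
        have hσne : σ e1 ≠ 0 := by
          rcases sq_cases1 σ with h | h <;> rw [h]
          · exact he1ne
          · exact neg_ne_zero.mpr he1ne
        rw [hu2] at hau
        rcases mul_eq_zero.mp hau with h | h
        · exact h
        · exact absurd h (mul_ne_zero h2A hσne)
      · rw [htdef, hc]; ring
    · intro hc
      rcases sq_cases1 σ with h1' | h1' <;> rcases sq_cases1 τ with h2' | h2'
      · exact absurd (h1'.trans h2'.symm) hc
      · constructor
        · rw [hudef, h1', h2']; ring
        · right; rw [htdef, h1', h2']; ring
      · constructor
        · rw [hudef, h1', h2']; ring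
        · left; rw [htdef, h1', h2']; ring
      · exact absurd (h1'.trans h2'.symm) hc
  have hfact2 : (σ e2 = τ e2 → ((∀ a : A, a * v = 0 → a = 0) ∧ s = 0))
      ∧ (σ e2 ≠ τ e2 → (v = 0 ∧ (s = 2 * e2 ∨ s = -(2 * e2)))) := by
    constructor
    · intro hc
      constructor
      · intro a hav
        have hv2 : v = 2 * σ e2 := by rw [hvdef, ← hc]; ring
        have hσne : σ e2 ≠ 0 := by
          rcases sq_cases2 σ with h | h <;> rw [h]
          · exact he2ne
          · exact neg_ne_zero.mpr he2ne
        rw [hv2] at hav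
        rcases mul_eq_zero.mp hav with h | h
        · exact h
        · exact absurd h (mul_ne_zero h2A hσne)
      · rw [hsdef, hc]; ring
    · intro hc
      rcases sq_cases2 σ with h1' | h1' <;> rcases sq_cases2 τ with h2' | h2'
      · exact absurd (h1'.trans h2'.symm) hc
      · constructor
        · rw [hvdef, h1', h2']; ring
        · right; rw [hsdef, h1', h2']; ring
      · constructor
        · rw [hvdef, h1', h2']; ring
        · left; rw [hsdef, h1', h2']; ring
      · exact absurd (h1'.trans h2'.symm) hc
  -- finrank of W is 4 in all cases
  have hWrank : Module.finrank ℤ W = 4 := by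
    by_cases hc1 : σ e1 = τ e1 <;> by_cases hc2 : σ e2 = τ e2
    · exact absurd hc1 (by rcases hdiff with h | h; exact h; exact absurd hc2 h)
    -- case B : σ e1 = τ e1, σ e2 ≠ τ e2 : W ≅ A via second coordinate
    · obtain ⟨hucancel, ht0⟩ := hfact1.1 hc1
      obtain ⟨hv0, hsval⟩ := hfact2.2 hc2
      have eqWA : W ≃ₗ[ℤ] A :=
        { toFun := fun w => w.1.2
          map_add' := fun w w' => rfl
          map_smul' := fun c w => rfl
          invFun := fun b => ⟨(0, b), (hWmem _).mpr (by
            refine ⟨by simp, by rw [hv0, mul_zero], by rw [ht0, mul_zero, zero_mul]⟩)⟩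
          left_inv := by
            rintro ⟨⟨a, b⟩, hw⟩
            obtain ⟨hw1, hw2, hw3⟩ := (hWmem _).mp hw
            have ha0 : a = 0 := hucancel a hw1
            apply Subtype.ext
            show (((0 : A), b) : A × A) = (a, b)
            rw [ha0]
          right_inv := fun b => rfl }
      rw [LinearEquiv.finrank_eq eqWA, hfr4]
    -- case A : σ e1 ≠ τ e1, σ e2 = τ e2 : W ≅ A via first coordinate
    · obtain ⟨hu0, htval⟩ := hfact1.2 hc1
      obtain ⟨hvcancel, hs0⟩ := hfact2.1 hc2
      have eqWA : W ≃ₗ[ℤ] A :=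
        { toFun := fun w => w.1.1
          map_add' := fun w w' => rfl
          map_smul' := fun c w => rfl
          invFun := fun a => ⟨(a, 0), (hWmem _).mpr (by
            refine ⟨by rw [hu0, mul_zero], by simp, by rw [hs0, mul_zero, zero_mul]⟩)⟩
          left_inv := by
            rintro ⟨⟨a, b⟩, hw⟩
            obtain ⟨hw1, hw2, hw3⟩ := (hWmem _).mp hw
            have hb0 : b = 0 := hvcancel b hw2
            apply Subtype.ext
            show ((a, (0 : A)) : A × A) = (a, b)
            rw [hb0]
          right_inv := fun a => rfl }
      rw [LinearEquiv.finrank_eq eqWA, hfr4]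
    -- case C : both differ
    · obtain ⟨hu0, htval⟩ := hfact1.2 hc1
      obtain ⟨hv0, hsval⟩ := hfact2.2 hc2
      have htne : t ≠ 0 := by
        rcases htval with h | h <;> rw [h]
        · exact hne2e1
        · exact neg_ne_zero.mpr hne2e1
      set φ : W →ₗ[ℤ] A :=
        { toFun := fun w => w.1.1 * e2
          map_add' := by intro w w'; simp [Prod.fst_add, add_mul]
          map_smul' := by intro c w; simp [Prod.smul_fst, smul_mul_assoc]; ring } with hφdef
      have hinj : Function.Injective φ := by
        rw [← LinearMap.ker_eq_bot]
        apply LinearMap.ker_eq_bot'.mpr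
        rintro ⟨⟨a, b⟩, hw⟩ hφw
        obtain ⟨hw1, hw2, hw3⟩ := (hWmem _).mp hw
        have hφw' : a * e2 = 0 := hφw
        have ha0 : a = 0 := by
          rcases mul_eq_zero.mp hφw' with h | h
          · exact h
          · exact absurd h he2ne
        have hb0 : b = 0 := by
          rw [ha0, zero_mul] at hw3
          rcases mul_eq_zero.mp hw3.symm with h | h
          · exact h
          · exact absurd h htne
        apply Subtype.ext
        show ((a, b) : A × A) = 0
        rw [ha0, hb0]; rfl
      set ψ : A →ₗ[ℤ] A := LinearMap.mulRight ℤ (e1 * e2) with hψdef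
      have hinjψ : Function.Injective ψ := by
        intro x y hxy
        have h12ne : e1 * e2 ≠ 0 := mul_ne_zero he1ne he2ne
        exact mul_right_cancel₀ h12ne hxy
      have hsub : LinearMap.range ψ ≤ LinearMap.range φ := by
        rintro x ⟨y, rfl⟩
        rcases htval with ht' | ht' <;> rcases hsval with hs' | hs'
        · refine ⟨⟨(e1 * y, e2 * y), (hWmem _).mpr
            ⟨by rw [hu0, mul_zero], by rw [hv0, mul_zero], by rw [ht', hs']; ring⟩⟩, ?_⟩
          show e1 * y * e2 = ψ y
          simp only [hψdef, LinearMap.mulRight_apply]; ring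
        · refine ⟨⟨(e1 * y, -(e2 * y)), (hWmem _).mpr
            ⟨by rw [hu0, mul_zero], by rw [hv0, mul_zero], by rw [ht', hs']; ring⟩⟩, ?_⟩
          show e1 * y * e2 = ψ y
          simp only [hψdef, LinearMap.mulRight_apply]; ring
        · refine ⟨⟨(e1 * y, -(e2 * y)), (hWmem _).mpr
            ⟨by rw [hu0, mul_zero], by rw [hv0, mul_zero], by rw [ht', hs']; ring⟩⟩, ?_⟩
          show e1 * y * e2 = ψ y
          simp only [hψdef, LinearMap.mulRight_apply]; ring
        · refine ⟨⟨(e1 * y, e2 * y), (hWmem _).mpr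
            ⟨by rw [hu0, mul_zero], by rw [hv0, mul_zero], by rw [ht', hs']; ring⟩⟩, ?_⟩
          show e1 * y * e2 = ψ y
          simp only [hψdef, LinearMap.mulRight_apply]; ring
      have r1 : Module.rank ℤ W = Module.rank ℤ (LinearMap.range φ) :=
        (LinearEquiv.ofInjective φ hinj).rank_eq
      have r2 : Module.rank ℤ (LinearMap.range ψ) = Module.rank ℤ A :=
        ((LinearEquiv.ofInjective ψ hinjψ).rank_eq).symm
      have r3 : Module.rank ℤ (LinearMap.range φ) ≤ Module.rank ℤ A := by
        have := Submodule.rank_mono (le_top : LinearMap.range φ ≤ ⊤) (R := ℤ)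
        rwa [rank_top] at this
      have r4 : Module.rank ℤ (LinearMap.range ψ) ≤ Module.rank ℤ (LinearMap.range φ) :=
        Submodule.rank_mono hsub
      have : Module.rank ℤ W = 4 := by
        rw [r1]
        refine le_antisymm (hrk4 ▸ r3) ?_
        calc (4 : Cardinal) = Module.rank ℤ A := hrk4.symm
          _ = Module.rank ℤ (LinearMap.range ψ) := r2.symm
          _ ≤ Module.rank ℤ (LinearMap.range φ) := r4
      exact Module.finrank_eq_of_rank_eq (by exact_mod_cast this)
  refine ⟨Sder, hSmem, Module.Free.of_equiv equivSW.symm, ?_⟩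
  rw [LinearEquiv.finrank_eq equivSW, hWrank]

theorem abasis (m n : ℤ) (hm : Squarefree m) (hn : Squarefree n)
    (hm1 : m ≠ 1) (hn1 : n ≠ 1) (hmn : m ≠ n)
    (sm sn : ℂ) (hsm : sm ^ 2 = (m : ℂ)) (hsn : sn ^ 2 = (n : ℂ)) :
    ∃ B : Module.Basis (Fin 4) ℤ (Algebra.adjoin ℤ ({sm, sn} : Set ℂ)),
      B 0 = 1 ∧ B 1 * B 1 = ((m : ℤ) : Algebra.adjoin ℤ ({sm, sn} : Set ℂ))
      ∧ B 2 * B 2 = ((n : ℤ) : Algebra.adjoin ℤ ({sm, sn} : Set ℂ))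
      ∧ B 3 = B 1 * B 2 := by
  classical
  set A := Algebra.adjoin ℤ ({sm, sn} : Set ℂ) with hAdef
  have hsmA : sm ∈ A := Algebra.subset_adjoin (by simp)
  have hsnA : sn ∈ A := Algebra.subset_adjoin (by simp)
  have hprodA : sm * sn ∈ A := mul_mem hsmA hsnA
  -- the four complex numbers
  set vv : Fin 4 → ℂ := ![1, sm, sn, sm * sn] with hvvdef
  set M : Submodule ℤ ℂ := Submodule.span ℤ (Set.range vv) with hMdef
  have hmemM : ∀ i, vv i ∈ M := fun i => Submodule.subset_span (Set.mem_range_self i)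
  have h1M : (1 : ℂ) ∈ M := hmemM 0
  have hsmM : sm ∈ M := hmemM 1
  have hsnM : sn ∈ M := hmemM 2
  have hpM : sm * sn ∈ M := hmemM 3
  have hsmsm : sm * sm = ((m : ℤ) : ℂ) := by push_cast; linear_combination hsm
  have hsnsn : sn * sn = ((n : ℤ) : ℂ) := by push_cast; linear_combination hsn
  -- generator products
  have hgen : ∀ i j : Fin 4, vv i * vv j ∈ M := by
    intro i j
    fin_cases i <;> fin_cases j
    · show (1 : ℂ) * 1 ∈ M; simpa using h1M
    · show (1 : ℂ) * sm ∈ M; simpa using hsmM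
    · show (1 : ℂ) * sn ∈ M; simpa using hsnM
    · show (1 : ℂ) * (sm * sn) ∈ M; simpa using hpM
    · show sm * 1 ∈ M; simpa using hsmM
    · show sm * sm ∈ M
      rw [hsmsm]
      simpa using M.smul_mem m h1M
    · show sm * sn ∈ M; exact hpM
    · show sm * (sm * sn) ∈ M
      rw [show sm * (sm * sn) = ((m:ℤ):ℂ) * sn by linear_combination sn * hsmsm]
      simpa using M.smul_mem m hsnM
    · show sn * 1 ∈ M; simpa using hsnM
    · show sn * sm ∈ M
      rw [show sn * sm = sm * sn from mul_comm _ _]; exact hpM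
    · show sn * sn ∈ M
      rw [hsnsn]
      simpa using M.smul_mem n h1M
    · show sn * (sm * sn) ∈ M
      rw [show sn * (sm * sn) = ((n:ℤ):ℂ) * sm by linear_combination sm * hsnsn]
      simpa using M.smul_mem n hsmM
    · show sm * sn * 1 ∈ M; simpa using hpM
    · show sm * sn * sm ∈ M
      rw [show sm * sn * sm = ((m:ℤ):ℂ) * sn by linear_combination sn * hsmsm]
      simpa using M.smul_mem m hsnM
    · show sm * sn * sn ∈ M
      rw [show sm * sn * sn = ((n:ℤ):ℂ) * sm by linear_combination sm * hsnsn]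
      simpa using M.smul_mem n hsmM
    · show sm * sn * (sm * sn) ∈ M
      rw [show sm * sn * (sm * sn) = ((m*n:ℤ):ℂ) * 1 by push_cast; linear_combination (sn*sn) * hsmsm + ((m:ℤ):ℂ) * hsnsn]
      simpa using M.smul_mem (m*n) h1M
  -- M is closed under multiplication
  have hmul0 : ∀ x ∈ M, ∀ y ∈ M, x * y ∈ M := by
    intro x hx
    induction hx using Submodule.span_induction with
    | mem z hz =>
      intro y hy
      obtain ⟨i, rfl⟩ := hz
      induction hy using Submodule.span_induction with
      | mem w hw => obtain ⟨j, rfl⟩ := hw; exact hgen i j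
      | zero => simpa using M.zero_mem
      | add y₁ y₂ _ _ ih1 ih2 => rw [mul_add]; exact M.add_mem ih1 ih2
      | smul c y₁ _ ih => rw [mul_smul_comm]; exact M.smul_mem c ih
    | zero => intro y hy; simpa using M.zero_mem
    | add x₁ x₂ _ _ ih1 ih2 =>
      intro y hy; rw [add_mul]; exact M.add_mem (ih1 y hy) (ih2 y hy)
    | smul c x₁ _ ih =>
      intro y hy; rw [smul_mul_assoc]; exact M.smul_mem c (ih y hy)
  -- A = M as submodules
  have hAM : Subalgebra.toSubmodule A = M := by
    apply le_antisymm
    · have : A ≤ M.toSubalgebra h1M (fun x y hx hy => hmul0 x hx y hy) := by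
        apply Algebra.adjoin_le
        intro z hz
        rcases hz with h | h
        · rw [h]; exact hsmM
        · rw [Set.mem_singleton_iff.mp h]; exact hsnM
      exact this
    · rw [Submodule.span_le]
      rintro z ⟨i, rfl⟩
      fin_cases i
      · exact A.one_mem
      · exact hsmA
      · exact hsnA
      · exact hprodA
  -- elements of A
  set E : Fin 4 → A := ![1, ⟨sm, hsmA⟩, ⟨sn, hsnA⟩, ⟨sm * sn, hprodA⟩] with hEdef
  have hvalE : ∀ i, (A.val.toLinearMap ∘ E) i = vv i := by
    intro i
    fin_cases i <;> rfl
  -- linear independence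
  have hliC : LinearIndependent ℤ vv := by
    rw [Fintype.linearIndependent_iff]
    intro g hg
    rw [Fin.sum_univ_four] at hg
    have hg' : ((g 0 : ℚ) : ℂ) + ((g 1 : ℚ) : ℂ) * sm + ((g 2 : ℚ) : ℂ) * sn
        + ((g 3 : ℚ) : ℂ) * (sm * sn) = 0 := by
      push_cast
      simpa [hvvdef, zsmul_eq_mul] using hg
    obtain ⟨h0, h1, h2, h3⟩ := radind m n hm hn hm1 hn1 hmn sm sn hsm hsn _ _ _ _ hg'
    intro i
    fin_cases i
    · exact_mod_cast h0
    · exact_mod_cast h1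
    · exact_mod_cast h2
    · exact_mod_cast h3
  have hliE : LinearIndependent ℤ E := by
    apply LinearIndependent.of_comp A.val.toLinearMap
    rw [show A.val.toLinearMap ∘ E = vv from funext hvalE]
    exact hliC
  -- spanning
  have hspanE : ⊤ ≤ Submodule.span ℤ (Set.range E) := by
    intro x _
    have hx : (x : ℂ) ∈ M := by rw [← hAM]; exact x.2
    have : (x : ℂ) ∈ Submodule.map A.val.toLinearMap (Submodule.span ℤ (Set.range E)) := by
      rw [Submodule.map_span, ← Set.range_comp,
        show A.val.toLinearMap ∘ E = vv from funext hvalE]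
      exact hx
    obtain ⟨y, hy, hyx⟩ := this
    have : y = x := Subtype.ext hyx
    rwa [← this]
  set B : Module.Basis (Fin 4) ℤ A := Module.Basis.mk hliE hspanE with hBdef
  have hB : ∀ i, B i = E i := fun i => Module.Basis.mk_apply hliE hspanE i
  refine ⟨B, ?_, ?_, ?_, ?_⟩
  · rw [hB 0]; rfl
  · apply Subtype.ext
    rw [hB 1]
    show sm * sm = ((m : ℤ) : ℂ)
    exact hsmsm
  · apply Subtype.ext
    rw [hB 2]
    show sn * sn = ((n : ℤ) : ℂ)
    exact hsnsn
  · apply Subtype.ext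
    rw [hB 3, hB 1, hB 2]
    rfl


/-- Let `m`, `n` be distinct squarefree integers, both different from `1`, let
`A = ℤ[√m, √n] ⊆ ℂ`, and let `σ`, `τ` be two distinct ring endomorphisms of `A`.  Then the set
of all `(σ,τ)`-derivations of `A` is a `ℤ`-submodule of the `ℤ`-module of `ℤ`-linear
endomorphisms of `A`, and this submodule is free of rank `4`. -/
theorem stmt17 (m n : ℤ) (hm : Squarefree m) (hn : Squarefree n)
    (hm1 : m ≠ 1) (hn1 : n ≠ 1) (hmn : m ≠ n)
    (sm sn : ℂ) (hsm : sm ^ 2 = (m : ℂ)) (hsn : sn ^ 2 = (n : ℂ))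
    (σ τ : Algebra.adjoin ℤ ({sm, sn} : Set ℂ) →+* Algebra.adjoin ℤ ({sm, sn} : Set ℂ))
    (hστ : σ ≠ τ) :
    ∃ S : Submodule ℤ
        (Algebra.adjoin ℤ ({sm, sn} : Set ℂ) →ₗ[ℤ] Algebra.adjoin ℤ ({sm, sn} : Set ℂ)),
      (∀ D, D ∈ S ↔ ∀ x y, D (x * y) = D x * τ y + σ x * D y) ∧
      Module.Free ℤ S ∧ Module.finrank ℤ S = 4 := by
  obtain ⟨B, hB0, h1, h2, h3⟩ := abasis m n hm hn hm1 hn1 hmn sm sn hsm hsn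
  apply main m n ?_ ?_ ?_ B hB0 h1 h2 h3 σ τ hστ
  · intro h
    have : ((m : ℤ) : ℂ) = 0 := congrArg (Algebra.adjoin ℤ ({sm, sn} : Set ℂ)).val h
    have hm0 : (m : ℤ) = 0 := by exact_mod_cast this
    exact hm.ne_zero hm0
  · intro h
    have : ((n : ℤ) : ℂ) = 0 := congrArg (Algebra.adjoin ℤ ({sm, sn} : Set ℂ)).val h
    have hn0 : (n : ℤ) = 0 := by exact_mod_cast this
    exact hn.ne_zero hn0
  · intro h
    have : ((2 : Algebra.adjoin ℤ ({sm, sn} : Set ℂ)) : ℂ) = 0 := congrArg (Algebra.adjoin ℤ ({sm, sn} : Set ℂ)).val h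
    norm_num at this
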